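/- In the ambient setup with a set F ⊆ E of free edges disjoint from B, consider the polynomial system in MvPolynomial E (ZMod 3) consisting of: (i) X_e² − X_e for every e ∈ F and X_e³ − X_e for every e ∉ F; (ii) X_e − β(e) for every boundary edge e ∈ B; (iii) X_{t(τ,0)} + X_{t(τ,1)} + X_{t(τ,2)} for every triangle τ; and (iv) for every triangle τ, the polynomial obtained from the distinguishing polynomial f_τ by substituting X_{t(τ,i)} for its i-th variable. Then a point x : E → ZMod 3 is a common zero of this system if and only if x(e) = β(e) for every e ∈ B, x(e) ∈ {0,1} for every e ∈ F, and for every triangle τ the triple (x(t(τ,0)), x(t(τ,1)), x(t(τ,2))) belongs to A(τ). Consequently, the variety of the side-free puzzle ideal is in one-one correspondence with the set of side-free tilings (tilings whose values on the free edges are unconstrained except for lying in {0,1}). -/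
import Mathlib


open MvPolynomial

/-- The defining polynomial system of the side-free puzzle ideal: quadratic
field equations on the free edges, cubic field equations on the remaining
edges, boundary equations, atomicity equations, and the distinguishing
polynomials applied to each triangle. -/
def sideFreePuzzleSystem {E T : Type*} (B F : Set E) (β : E → ZMod 3)
    (t : T → Fin 3 → E) (f : T → MvPolynomial (Fin 3) (ZMod 3)) :
    Set (MvPolynomial E (ZMod 3)) :=
  ((fun e : E => X e ^ 2 - X e) '' F) ∪
  ((fun e : E => X e ^ 3 - X e) '' Fᶜ) ∪
  ((fun e : E => X e - C (β e)) '' B) ∪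
  (Set.range fun τ : T => X (t τ 0) + X (t τ 1) + X (t τ 2)) ∪
  (Set.range fun τ : T => rename (t τ) (f τ))

/-- a point `x : E → ZMod 3` is a common zero of the defining
polynomial system of the side-free puzzle ideal iff it matches the boundary
values on `B`, takes values in `{0,1}` on the free edges `F`, and restricts to
an allowed atomic piece on every triangle; consequently the variety of the
side-free puzzle ideal equals (hence is in one-one correspondence with) the
set of side-free tilings. -/
theorem sideFreePuzzleSystem_zeros_eq_sideFree_tilings
    {E T : Type*} [Fintype E] [Fintype T]
    (B F : Set E) (hBF : B ∩ F = ∅)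
    (β : E → ZMod 3) (t : T → Fin 3 → E)
    (A : T → Set (Fin 3 → ZMod 3))
    (hA : ∀ τ, ∀ v ∈ A τ, v 0 + v 1 + v 2 = 0)
    (f : T → MvPolynomial (Fin 3) (ZMod 3))
    (hf : ∀ τ, ∀ v : Fin 3 → ZMod 3, v 0 + v 1 + v 2 = 0 →
      (MvPolynomial.eval v (f τ) = 0 ↔ v ∈ A τ)) :
    (∀ x : E → ZMod 3,
      (∀ p ∈ sideFreePuzzleSystem B F β t f, MvPolynomial.eval x p = 0) ↔
        ((∀ e ∈ B, x e = β e) ∧ (∀ e ∈ F, x e = 0 ∨ x e = 1) ∧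
          ∀ τ, (fun i => x (t τ i)) ∈ A τ)) ∧
    {x : E → ZMod 3 |
        ∀ p ∈ Ideal.span (sideFreePuzzleSystem B F β t f), MvPolynomial.eval x p = 0} =
      {x : E → ZMod 3 | (∀ e ∈ B, x e = β e) ∧ (∀ e ∈ F, x e = 0 ∨ x e = 1) ∧
          ∀ τ, (fun i => x (t τ i)) ∈ A τ} := by

  have key : ∀ x : E → ZMod 3,
      (∀ p ∈ sideFreePuzzleSystem B F β t f, MvPolynomial.eval x p = 0) ↔
        ((∀ e ∈ B, x e = β e) ∧ (∀ e ∈ F, x e = 0 ∨ x e = 1) ∧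
          ∀ τ, (fun i => x (t τ i)) ∈ A τ) := by
    intro x
    constructor
    · intro h
      have hB : ∀ e ∈ B, x e = β e := by
        intro e he
        have := h _ (Or.inl (Or.inl (Or.inr ⟨e, he, rfl⟩)))
        simp at this
        linear_combination this
      have hFv : ∀ e ∈ F, x e = 0 ∨ x e = 1 := by
        intro e he
        have := h _ (Or.inl (Or.inl (Or.inl (Or.inl ⟨e, he, rfl⟩))))
        simp at this
        have h2 : x e * (x e - 1) = 0 := by ring_nf; linear_combination this
        rcases mul_eq_zero.1 h2 with h3 | h3
        · exact Or.inl h3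
        · exact Or.inr (by linear_combination h3)
      refine ⟨hB, hFv, fun τ => ?_⟩
      have hsum : x (t τ 0) + x (t τ 1) + x (t τ 2) = 0 := by
        have := h _ (Or.inl (Or.inr ⟨τ, rfl⟩))
        simpa using this
      have hev : MvPolynomial.eval (fun i => x (t τ i)) (f τ) = 0 := by
        have := h _ (Or.inr ⟨τ, rfl⟩)
        rwa [eval_rename] at this
      exact (hf τ _ hsum).1 hev
    · rintro ⟨hB, hFv, hAτ⟩ p hp
      rcases hp with ((((⟨e, he, rfl⟩ | ⟨e, _, rfl⟩) | ⟨e, he, rfl⟩) | ⟨τ, rfl⟩) | ⟨τ, rfl⟩)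
      · rcases hFv e he with h1 | h1 <;> simp [h1]
      · have : ∀ a : ZMod 3, a ^ 3 - a = 0 := by decide
        simpa using this (x e)
      · simp [hB e he]
      · simpa using hA τ _ (hAτ τ)
      · rw [eval_rename]
        exact (hf τ _ (hA τ _ (hAτ τ))).2 (hAτ τ)
  refine ⟨key, ?_⟩
  ext x
  simp only [Set.mem_setOf_eq]
  rw [← key x]
  constructor
  · exact fun h p hp => h p (Ideal.subset_span hp)
  · intro h p hp
    have : Ideal.span (sideFreePuzzleSystem B F β t f) ≤
        RingHom.ker (MvPolynomial.eval x) := Ideal.span_le.2 (fun q hq => h q hq)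
    exact this hp
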